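/- Let mu_1,...,mu_k be probability measures supported on [0, L] with mean 1, all of whose free cumulants are non-negative. Then the free multiplicative convolution mu = mu_1 ⊠ ... ⊠ mu_k is supported in [0, e L (k+1)]; more precisely limsup_n (m_n(mu))^{1/n} ≤ (k+1)^{k+1}/k^k * L ≤ e(k+1)L. -/

import Mathlib

open scoped BigOperators Classical

/-- Partitions of `Fin n` (i.e. of `{1,…,n}`). -/
abbrev NCP (n : ℕ) := Finpartition (Finset.univ : Finset (Fin n))

/-- `x` and `y` lie in the same block of `P`. -/
def pRel {n : ℕ} (P : NCP n) (x y : Fin n) : Prop := ∃ t ∈ P.parts, x ∈ t ∧ y ∈ t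

/-- `P` is a non-crossing partition. -/
def IsNonCrossing {n : ℕ} (P : NCP n) : Prop :=
  ∀ a b c d : Fin n, a < b → b < c → c < d → pRel P a c → pRel P b d → pRel P a b

/-- Every block of `P` has exactly `k` elements (`k`-equal). -/
def IsKEqual (k : ℕ) {n : ℕ} (P : NCP n) : Prop := ∀ t ∈ P.parts, t.card = k

/-- Every block of `P` has size divisible by `k` (`k`-divisible). -/
def IsKDivisible (k : ℕ) {n : ℕ} (P : NCP n) : Prop := ∀ t ∈ P.parts, k ∣ t.card

/-- Every block of `P` contains only numbers of one residue class mod `k`. -/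
def IsKPreserving (k : ℕ) {n : ℕ} (P : NCP n) : Prop :=
  ∀ t ∈ P.parts, ∀ x ∈ t, ∀ y ∈ t, (x : ℕ) % k = (y : ℕ) % k

/-- The relation on `{1,…,2n}` obtained by putting `P` on the odd positions and `Q` on
the even positions (0-indexed: `P` on evens, `Q` on odds). -/
def jointRel {n : ℕ} (P Q : NCP n) (x y : Fin (2 * n)) : Prop :=
  ((x : ℕ) % 2 = 0 ∧ (y : ℕ) % 2 = 0 ∧
      pRel P ⟨(x : ℕ) / 2, by have := x.isLt; omega⟩ ⟨(y : ℕ) / 2, by have := y.isLt; omega⟩) ∨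
  ((x : ℕ) % 2 = 1 ∧ (y : ℕ) % 2 = 1 ∧
      pRel Q ⟨(x : ℕ) / 2, by have := x.isLt; omega⟩ ⟨(y : ℕ) / 2, by have := y.isLt; omega⟩)

/-- A symmetric-relation analogue of non-crossing. -/
def RelNonCrossing {m : ℕ} (R : Fin m → Fin m → Prop) : Prop :=
  ∀ a b c d : Fin m, a < b → b < c → c < d → R a c → R b d → R a b

/-- `Q` is the Kreweras complement of `P`: the union `P ∪ Q` (interleaved) is non-crossing and
`Q` is the largest such partition in the reverse refinement order. -/
def IsKr {n : ℕ} (P Q : NCP n) : Prop :=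
  RelNonCrossing (jointRel P Q) ∧ ∀ Q' : NCP n, RelNonCrossing (jointRel P Q') → Q' ≤ Q

open MeasureTheory

/-- For a `k`-preserving partition `Q` (the Kreweras complement of a `k`-divisible or `k`-equal
partition), `Q` decomposes as `π₁ ∪ ⋯ ∪ π_k` along residue classes mod `k`; this is the product
`κ_{π₁}(μ₁)⋯κ_{π_k}(μ_k)`, computed as a product over the blocks of `Q`, where each block uses
the cumulant sequence `c i` of the measure `μ_i` determined by the residue class mod `k` of its
elements. -/
noncomputable def krProd (k : ℕ) (hk : 0 < k) {m : ℕ} (Q : NCP m)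
    (c : Fin k → ℕ → ℝ) : ℝ :=
  ∏ t ∈ Q.parts.attach,
    c ⟨((t.1.min' (Q.nonempty_of_mem_parts t.2)) : ℕ) % k, Nat.mod_lt _ hk⟩ t.1.card
-- ###################### my additions start here

open Finset

lemma aux_pRel_symm {m : ℕ} {P : NCP m} {x y : Fin m} (h : pRel P x y) : pRel P y x := by
  obtain ⟨t, ht, hx, hy⟩ := h; exact ⟨t, ht, hy, hx⟩

lemma aux_pRel_iff {m : ℕ} {P : NCP m} {x y : Fin m} :
    pRel P x y ↔ P.part x = P.part y := by
  constructor
  · rintro ⟨t, ht, hx, hy⟩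
    rw [P.part_eq_of_mem ht hx, P.part_eq_of_mem ht hy]
  · intro h
    exact ⟨P.part x, P.part_mem.2 (mem_univ x), P.mem_part (mem_univ x),
      h ▸ P.mem_part (mem_univ y)⟩

lemma aux_jodd {m : ℕ} (P Q : NCP m) {q q' : Fin m} (h : pRel Q q q') :
    jointRel P Q ⟨2*q.val+1, by have := q.isLt; omega⟩ ⟨2*q'.val+1, by have := q'.isLt; omega⟩ := by
  right
  refine ⟨by show (2*q.val+1) % 2 = 1; omega, by show (2*q'.val+1) % 2 = 1; omega, ?_⟩
  convert h using 2
  · show (2*q.val+1)/2 = q.val; omega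
  · show (2*q'.val+1)/2 = q'.val; omega

lemma aux_jeven {m : ℕ} (P Q : NCP m) {p p' : Fin m} (h : pRel P p p') :
    jointRel P Q ⟨2*p.val, by have := p.isLt; omega⟩ ⟨2*p'.val, by have := p'.isLt; omega⟩ := by
  left
  refine ⟨by show (2*p.val) % 2 = 0; omega, by show (2*p'.val) % 2 = 0; omega, ?_⟩
  convert h using 2
  · show (2*p.val)/2 = p.val; omega
  · show (2*p'.val)/2 = p'.val; omega

lemma aux_key1 {m : ℕ} {P Q : NCP m} (h : RelNonCrossing (jointRel P Q))
    {q q' p : Fin m} (hqq' : q < q') (hQ : pRel Q q q') (hP : pRel P p q') : p ≤ q' := by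
  by_contra hp
  push_neg at hp
  have hv : q.val < q'.val := hqq'
  have hv2 : q'.val < p.val := hp
  have H := h ⟨2*q.val+1, by have := q.isLt; omega⟩ ⟨2*q'.val, by have := q'.isLt; omega⟩
    ⟨2*q'.val+1, by have := q'.isLt; omega⟩ ⟨2*p.val, by have := p.isLt; omega⟩
    (show _ < _ by simp only [Fin.mk_lt_mk]; omega)
    (show _ < _ by simp only [Fin.mk_lt_mk]; omega)
    (show _ < _ by simp only [Fin.mk_lt_mk]; omega)
    (aux_jodd P Q hQ) (aux_jeven P Q (aux_pRel_symm hP))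
  rcases H with ⟨h1, _, _⟩ | ⟨_, h2, _⟩
  · have h1' : (2*q.val+1) % 2 = 0 := h1
    omega
  · have h2' : (2*q'.val) % 2 = 1 := h2
    omega

lemma aux_key2 {m : ℕ} {P Q : NCP m} (h : RelNonCrossing (jointRel P Q))
    {q q' p : Fin m} (hqq' : q < q') (hQ : pRel Q q q') (hP : pRel P p q') : q < p := by
  by_contra hp
  push_neg at hp
  have hv : q.val < q'.val := hqq'
  have hv2 : p.val ≤ q.val := hp
  have H := h ⟨2*p.val, by have := p.isLt; omega⟩ ⟨2*q.val+1, by have := q.isLt; omega⟩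
    ⟨2*q'.val, by have := q'.isLt; omega⟩ ⟨2*q'.val+1, by have := q'.isLt; omega⟩
    (show _ < _ by simp only [Fin.mk_lt_mk]; omega)
    (show _ < _ by simp only [Fin.mk_lt_mk]; omega)
    (show _ < _ by simp only [Fin.mk_lt_mk]; omega)
    (aux_jeven P Q hP) (aux_jodd P Q hQ)
  rcases H with ⟨_, h1, _⟩ | ⟨h2, _, _⟩
  · have h1' : (2*q.val+1) % 2 = 0 := h1
    omega
  · have h2' : (2*p.val) % 2 = 1 := h2
    omega

lemma aux_kr_card {m : ℕ} (hm : 0 < m) (P Q : NCP m) (h : RelNonCrossing (jointRel P Q)) :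
    m + 1 ≤ P.parts.card + Q.parts.card := by
  classical
  set z0 : Fin m := ⟨0, hm⟩ with hz0
  set S : Finset (Fin m) := univ.filter (fun x => ∃ y, y < x ∧ pRel Q y x) with hS
  -- the complement of S is the set of block minima of Q
  have hScompl : Sᶜ = Q.parts.attach.image
      (fun t => t.1.min' (Q.nonempty_of_mem_parts t.2)) := by
    ext x
    simp only [mem_compl, hS, mem_filter, mem_univ, true_and, not_exists, not_and, mem_image,
      mem_attach, true_and, Subtype.exists]
    constructor
    · intro hx
      refine ⟨Q.part x, Q.part_mem.2 (mem_univ x), ?_⟩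
      have hmm := Finset.min'_mem (Q.part x) ⟨x, Q.mem_part (mem_univ x)⟩
      have hle := Finset.min'_le (Q.part x) x (Q.mem_part (mem_univ x))
      rcases eq_or_lt_of_le hle with he | hlt
      · exact he
      · exact absurd (⟨Q.part x, Q.part_mem.2 (mem_univ x), hmm, Q.mem_part (mem_univ x)⟩ :
          pRel Q _ x) (hx _ hlt)
    · rintro ⟨t, ht, rfl⟩
      intro y hy hrel
      obtain ⟨u, hu, hyu, hxu⟩ := hrel
      have hut : u = t := Q.eq_of_mem_parts hu ht hxu (Finset.min'_mem t _)
      subst hut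
      exact absurd (Finset.min'_le u y hyu) (by exact not_le.2 hy)
  have hScard : Sᶜ.card = Q.parts.card := by
    rw [hScompl]
    have hinj : Set.InjOn (fun t : {x // x ∈ Q.parts} => t.1.min' (Q.nonempty_of_mem_parts t.2))
        Q.parts.attach := by
      intro t _ u _ he
      dsimp only at he
      have h1 : t.1.min' (Q.nonempty_of_mem_parts t.2) ∈ u.1 := by
        rw [he]; exact Finset.min'_mem u.1 _
      exact Subtype.ext (Q.eq_of_mem_parts t.2 u.2 (Finset.min'_mem t.1 _) h1)
    rw [Finset.card_image_of_injOn hinj, Finset.card_attach]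
  have hcardsum : S.card + Q.parts.card = m := by
    have h1 : Sᶜ.card = Fintype.card (Fin m) - S.card := Finset.card_compl S
    have h2 : S.card ≤ Finset.univ.card := Finset.card_le_univ S
    rw [Finset.card_univ] at h2
    rw [Fintype.card_fin] at h1 h2
    omega
  have hmaps : ∀ x ∈ S, P.part x ∈ P.parts.erase (P.part z0) := by
    intro x hx
    rw [hS, mem_filter] at hx
    obtain ⟨-, y, hyx, hQyx⟩ := hx
    rw [mem_erase]
    refine ⟨?_, P.part_mem.2 (mem_univ x)⟩
    intro heq
    have hrel : pRel P z0 x := aux_pRel_iff.2 heq.symm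
    have := aux_key2 h hyx hQyx hrel
    have h0 : y.val < (0:ℕ) := this
    omega
  have hinjOn : Set.InjOn (fun x => P.part x) S := by
    intro x hx y hy he
    dsimp only at he
    by_contra hne
    rcases lt_or_gt_of_ne hne with hlt | hlt
    · have hx' := Finset.mem_coe.1 hx
      rw [hS, mem_filter] at hx'
      obtain ⟨-, w, hwx, hQw⟩ := hx'
      have hP : pRel P y x := aux_pRel_iff.2 he.symm
      exact absurd (aux_key1 h hwx hQw hP) (not_le.2 hlt)
    · have hy' := Finset.mem_coe.1 hy
      rw [hS, mem_filter] at hy'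
      obtain ⟨-, w, hwy, hQw⟩ := hy'
      have hP : pRel P x y := aux_pRel_iff.2 he
      exact absurd (aux_key1 h hwy hQw hP) (not_le.2 hlt)
  have hle : S.card ≤ (P.parts.erase (P.part z0)).card :=
    Finset.card_le_card_of_injOn _ hmaps hinjOn
  have herase : (P.parts.erase (P.part z0)).card = P.parts.card - 1 :=
    Finset.card_erase_of_mem (P.part_mem.2 (mem_univ z0))
  have hne : Nonempty (Fin m) := ⟨z0⟩
  have hppos : 0 < P.parts.card := Finset.card_pos.2 (P.parts_nonempty
    (by simpa [Finset.bot_eq_empty] using (Finset.univ_nonempty (α := Fin m)).ne_empty))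
  omega

-- ## data (minima-and-sizes) machinery

noncomputable def auxData {m : ℕ} {s : Finset (Fin m)} (P : Finpartition s) (x : Fin m) : ℕ :=
  if x ∈ s ∧ ∀ y ∈ P.part x, x ≤ y then (P.part x).card else 0

def auxNC {m : ℕ} {s : Finset (Fin m)} (P : Finpartition s) : Prop :=
  ∀ a b c d : Fin m, a < b → b < c → c < d →
    (∃ t ∈ P.parts, a ∈ t ∧ c ∈ t) → (∃ t ∈ P.parts, b ∈ t ∧ d ∈ t) →
    (∃ t ∈ P.parts, a ∈ t ∧ b ∈ t)

lemma auxData_mem_filter {m : ℕ} {s : Finset (Fin m)} (P : Finpartition s) (x : Fin m) :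
    x ∈ s.filter (fun x => auxData P x ≠ 0) ↔ x ∈ s ∧ ∀ y ∈ P.part x, x ≤ y := by
  rw [mem_filter, auxData]
  constructor
  · rintro ⟨hx, hne⟩
    split_ifs at hne with hcond
    · exact hcond
    · exact absurd rfl hne
  · rintro ⟨hx, hmin⟩
    refine ⟨hx, ?_⟩
    rw [if_pos ⟨hx, hmin⟩]
    exact (P.nonempty_of_mem_parts (P.part_mem.2 hx)).card_pos.ne'

lemma aux_sum_data {m : ℕ} {s : Finset (Fin m)} (P : Finpartition s) :
    ∑ x, auxData P x = s.card := by
  classical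
  rw [← Finset.sum_subset (Finset.subset_univ (s.filter (fun x => auxData P x ≠ 0)))
    (by intro x _ hx
        by_cases hxs : x ∈ s
        · by_contra hne
          exact hx (mem_filter.2 ⟨hxs, hne⟩)
        · rw [auxData, if_neg (fun hc => hxs hc.1)])]
  rw [← P.sum_card_parts]
  apply Finset.sum_bij (i := fun x _ => P.part x)
  · intro x hx
    exact P.part_mem.2 ((auxData_mem_filter P x).1 hx).1
  · intro x hx y hy he
    obtain ⟨hxs, hxmin⟩ := (auxData_mem_filter P x).1 hx
    obtain ⟨hys, hymin⟩ := (auxData_mem_filter P y).1 hy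
    have h1 : y ∈ P.part x := he ▸ P.mem_part hys
    have h2 : x ∈ P.part y := he.symm ▸ P.mem_part hxs
    exact le_antisymm (hxmin y h1) (hymin x h2)
  · intro t ht
    refine ⟨t.min' (P.nonempty_of_mem_parts ht), ?_, ?_⟩
    · rw [auxData_mem_filter]
      have hmem := Finset.min'_mem t (P.nonempty_of_mem_parts ht)
      have hts : t ⊆ s := P.le ht
      have hpart : P.part (t.min' (P.nonempty_of_mem_parts ht)) = t :=
        P.part_eq_of_mem ht hmem
      refine ⟨hts hmem, ?_⟩
      rw [hpart]
      intro y hy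
      exact Finset.min'_le t y hy
    · exact P.part_eq_of_mem ht (Finset.min'_mem t _)
  · intro x hx
    obtain ⟨hxs, hxmin⟩ := (auxData_mem_filter P x).1 hx
    rw [auxData, if_pos ⟨hxs, hxmin⟩]

-- interval property of the block of the largest minimum
lemma aux_block_eq {m : ℕ} {s : Finset (Fin m)} (P : Finpartition s) (hP : auxNC P)
    {i : Fin m} (hi : i ∈ s) (himin : ∀ y ∈ P.part i, i ≤ y)
    (hmax : ∀ x, x ∈ s → (∀ y ∈ P.part x, x ≤ y) → x ≤ i) :
    P.part i = s.filter (fun x => i ≤ x ∧ x ≤ (P.part i).max' ⟨i, P.mem_part hi⟩) := by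
  classical
  set M := (P.part i).max' ⟨i, P.mem_part hi⟩ with hM
  apply Finset.Subset.antisymm
  · intro x hx
    rw [mem_filter]
    exact ⟨(P.le (P.part_mem.2 hi)) hx, himin x hx, Finset.le_max' _ x hx⟩
  · intro x hx
    rw [mem_filter] at hx
    obtain ⟨hxs, hix, hxM⟩ := hx
    by_contra hxB
    have hxi : x ≠ i := fun hc => hxB (by rw [hc]; exact P.mem_part hi)
    have hix' : i < x := lt_of_le_of_ne hix (fun hc => hxi hc.symm)
    have hMmem : M ∈ P.part i := Finset.max'_mem _ _
    have hxM' : x < M := lt_of_le_of_ne hxM (fun hc => hxB (hc ▸ hMmem))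
    set C := P.part x with hC
    have hCp : C ∈ P.parts := P.part_mem.2 hxs
    have hCs : C ⊆ s := P.le hCp
    set mc := C.min' ⟨x, P.mem_part hxs⟩ with hmc
    have hmcC : mc ∈ C := Finset.min'_mem _ _
    have hmcs : mc ∈ s := hCs hmcC
    have hpartmc : P.part mc = C := P.part_eq_of_mem hCp hmcC
    have hmcmin : ∀ y ∈ P.part mc, mc ≤ y := by
      rw [hpartmc]; intro y hy; exact Finset.min'_le _ y hy
    have hmci : mc ≤ i := hmax mc hmcs hmcmin
    have hmcne : mc ≠ i := by
      intro hc
      have : i ∈ C := hc ▸ hmcC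
      exact hxB (by rw [P.part_eq_of_mem hCp this]; exact P.mem_part hxs)
    have hmclt : mc < i := lt_of_le_of_ne hmci hmcne
    obtain ⟨t, ht, hmt, hit⟩ := hP mc i x M hmclt hix' hxM'
      ⟨C, hCp, hmcC, P.mem_part hxs⟩ ⟨P.part i, P.part_mem.2 hi, P.mem_part hi, hMmem⟩
    have htC : t = C := P.eq_of_mem_parts ht hCp hmt hmcC
    have : i ∈ C := htC ▸ hit
    exact hxB (by rw [P.part_eq_of_mem hCp this]; exact P.mem_part hxs)

lemma aux_avoid_parts {m : ℕ} {s : Finset (Fin m)} (P : Finpartition s)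
    {B : Finset (Fin m)} (hB : B ∈ P.parts) : (P.avoid B).parts = P.parts.erase B := by
  classical
  ext c
  rw [Finpartition.mem_avoid, mem_erase]
  constructor
  · rintro ⟨d, hd, hdB, rfl⟩
    have hdne : d ≠ B := by
      intro hc; subst hc; exact hdB le_rfl
    have hdisj : Disjoint d B := P.disjoint hd hB hdne
    rw [Finset.sdiff_eq_self_of_disjoint hdisj]
    exact ⟨hdne, hd⟩
  · rintro ⟨hcB, hc⟩
    have hdisj : Disjoint c B := P.disjoint hc hB hcB
    refine ⟨c, hc, ?_, Finset.sdiff_eq_self_of_disjoint hdisj⟩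
    intro hle
    exact P.ne_bot hc (le_bot_iff.1 (hdisj le_rfl hle))

lemma aux_avoid_nc {m : ℕ} {s : Finset (Fin m)} {P : Finpartition s} (hP : auxNC P)
    {B : Finset (Fin m)} (hB : B ∈ P.parts) : auxNC (P.avoid B) := by
  intro a b c d h1 h2 h3 r1 r2
  rw [aux_avoid_parts P hB] at r1 r2 ⊢
  obtain ⟨t1, ht1, ha1, hc1⟩ := r1
  obtain ⟨t2, ht2, hb2, hd2⟩ := r2
  obtain ⟨t, ht, ha, hb⟩ := hP a b c d h1 h2 h3
    ⟨t1, mem_of_mem_erase ht1, ha1, hc1⟩ ⟨t2, mem_of_mem_erase ht2, hb2, hd2⟩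
  have : t = t1 := P.eq_of_mem_parts ht (mem_of_mem_erase ht1) ha ha1
  subst this
  exact ⟨t, ht1, ha, hb⟩

lemma aux_avoid_data {m : ℕ} {s : Finset (Fin m)} (P : Finpartition s)
    {B : Finset (Fin m)} (hB : B ∈ P.parts) :
    auxData (P.avoid B) = fun x => if x ∈ B then 0 else auxData P x := by
  classical
  funext x
  by_cases hxB : x ∈ B
  · rw [if_pos hxB, auxData, if_neg]
    rintro ⟨hx, -⟩
    exact (Finset.mem_sdiff.1 hx).2 hxB
  · rw [if_neg hxB]
    by_cases hxs : x ∈ s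
    · have hxsd : x ∈ s \ B := Finset.mem_sdiff.2 ⟨hxs, hxB⟩
      have hpne : P.part x ≠ B := by
        intro hc; exact hxB (hc ▸ P.mem_part hxs)
      have hpmem : P.part x ∈ (P.avoid B).parts := by
        rw [aux_avoid_parts P hB]
        exact mem_erase.2 ⟨hpne, P.part_mem.2 hxs⟩
      have hpart : (P.avoid B).part x = P.part x :=
        Finpartition.part_eq_of_mem _ hpmem (P.mem_part hxs)
      rw [auxData, auxData, hpart]
      simp [hxsd, hxs]
    · have hxsd : x ∉ s \ B := fun hc => hxs (Finset.mem_sdiff.1 hc).1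
      rw [auxData, auxData, if_neg (fun hc => hxsd hc.1), if_neg (fun hc => hxs hc.1)]

lemma aux_data_inj {m : ℕ} (N : ℕ) :
    ∀ (s : Finset (Fin m)), s.card ≤ N → ∀ (P P' : Finpartition s),
      auxNC P → auxNC P' → auxData P = auxData P' → P = P' := by
  induction N with
  | zero =>
    intro s hs P P' _ _ _
    have hse : s = ∅ := Finset.card_eq_zero.1 (Nat.le_zero.1 hs)
    have h1 : P.parts = ∅ := Finpartition.parts_eq_empty_iff.2 (by rw [hse]; rfl)
    have h2 : P'.parts = ∅ := Finpartition.parts_eq_empty_iff.2 (by rw [hse]; rfl)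
    ext t; rw [h1, h2]
  | succ N ih =>
    intro s hs P P' hP hP' hd
    classical
    rcases eq_or_ne s ∅ with rfl | hne
    · have h1 : P.parts = ∅ := Finpartition.parts_eq_empty_iff.2 rfl
      have h2 : P'.parts = ∅ := Finpartition.parts_eq_empty_iff.2 rfl
      ext t; rw [h1, h2]
    · have hsne : s.Nonempty := Finset.nonempty_of_ne_empty hne
      have hfe : s.filter (fun x => auxData P' x ≠ 0) = s.filter (fun x => auxData P x ≠ 0) := by
        rw [hd]
      obtain ⟨x0, hx0⟩ := hsne
      have hMne : (s.filter (fun x => auxData P x ≠ 0)).Nonempty := by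
        refine ⟨(P.part x0).min' ⟨x0, P.mem_part hx0⟩, ?_⟩
        rw [auxData_mem_filter]
        have hmem := Finset.min'_mem (P.part x0) ⟨x0, P.mem_part hx0⟩
        have hts : P.part x0 ⊆ s := P.le (P.part_mem.2 hx0)
        have hpart := P.part_eq_of_mem (P.part_mem.2 hx0) hmem
        exact ⟨hts hmem, by rw [hpart]; exact fun y hy => Finset.min'_le _ y hy⟩
      set i := (s.filter (fun x => auxData P x ≠ 0)).max' hMne with hidef
      have hiM : i ∈ s.filter (fun x => auxData P x ≠ 0) := Finset.max'_mem _ _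
      obtain ⟨his, himin⟩ := (auxData_mem_filter P i).1 hiM
      obtain ⟨-, himin'⟩ := (auxData_mem_filter P' i).1 (by rw [hfe]; exact hiM)
      have hmax : ∀ x, x ∈ s → (∀ y ∈ P.part x, x ≤ y) → x ≤ i := fun x hx h =>
        Finset.le_max' _ x ((auxData_mem_filter P x).2 ⟨hx, h⟩)
      have hmax' : ∀ x, x ∈ s → (∀ y ∈ P'.part x, x ≤ y) → x ≤ i := fun x hx h =>
        Finset.le_max' _ x (hfe ▸ (auxData_mem_filter P' x).2 ⟨hx, h⟩)
      have hBeq := aux_block_eq P hP his himin hmax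
      have hB'eq := aux_block_eq P' hP' his himin' hmax'
      have hcard : (P.part i).card = (P'.part i).card := by
        have h1 : auxData P i = (P.part i).card := by rw [auxData, if_pos ⟨his, himin⟩]
        have h2 : auxData P' i = (P'.part i).card := by rw [auxData, if_pos ⟨his, himin'⟩]
        rw [← h1, ← h2, hd]
      have hMM : (P.part i).max' ⟨i, P.mem_part his⟩ = (P'.part i).max' ⟨i, P'.mem_part his⟩ := by
        by_contra hMne'
        rcases lt_or_gt_of_ne hMne' with hlt | hlt
        · have hsub : P.part i ⊆ P'.part i := by
            rw [hBeq, hB'eq]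
            intro x hx
            rw [mem_filter] at hx ⊢
            exact ⟨hx.1, hx.2.1, le_trans hx.2.2 (le_of_lt hlt)⟩
          have hM2B' : (P'.part i).max' ⟨i, P'.mem_part his⟩ ∈ P'.part i := Finset.max'_mem _ _
          have hM2B : (P'.part i).max' ⟨i, P'.mem_part his⟩ ∉ P.part i := by
            intro hc
            exact absurd (Finset.le_max' _ _ hc) (not_le.2 hlt)
          have := Finset.card_lt_card ((Finset.ssubset_iff_of_subset hsub).2 ⟨_, hM2B', hM2B⟩)
          omega
        · have hsub : P'.part i ⊆ P.part i := by
            rw [hBeq, hB'eq]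
            intro x hx
            rw [mem_filter] at hx ⊢
            exact ⟨hx.1, hx.2.1, le_trans hx.2.2 (le_of_lt hlt)⟩
          have hM2B' : (P.part i).max' ⟨i, P.mem_part his⟩ ∈ P.part i := Finset.max'_mem _ _
          have hM2B : (P.part i).max' ⟨i, P.mem_part his⟩ ∉ P'.part i := by
            intro hc
            exact absurd (Finset.le_max' _ _ hc) (not_le.2 hlt)
          have := Finset.card_lt_card ((Finset.ssubset_iff_of_subset hsub).2 ⟨_, hM2B', hM2B⟩)
          omega
      have hBB : P.part i = P'.part i := by rw [hBeq, hB'eq, hMM]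
      have hBp : P.part i ∈ P.parts := P.part_mem.2 his
      have hB'p : P.part i ∈ P'.parts := by rw [hBB]; exact P'.part_mem.2 his
      have hBsub : P.part i ⊆ s := P.le hBp
      have hBne2 : (P.part i).Nonempty := ⟨i, P.mem_part his⟩
      have hcards : (s \ P.part i).card ≤ N := by
        rw [Finset.card_sdiff_of_subset hBsub]
        have h3 := Finset.card_pos.2 hBne2
        have h4 := Finset.card_le_card hBsub
        omega
      have hIH := ih (s \ P.part i) hcards (P.avoid (P.part i)) (P'.avoid (P.part i))
        (aux_avoid_nc hP hBp) (aux_avoid_nc hP' hB'p)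
        (by rw [aux_avoid_data P hBp, aux_avoid_data P' hB'p, hd])
      have h1 : P.parts = insert (P.part i) ((P.avoid (P.part i)).parts) := by
        rw [aux_avoid_parts P hBp, Finset.insert_erase hBp]
      have h2 : P'.parts = insert (P.part i) ((P'.avoid (P.part i)).parts) := by
        rw [aux_avoid_parts P' hB'p, Finset.insert_erase hB'p]
      ext t
      rw [h1, h2, hIH]

noncomputable def auxF {m : ℕ} (k : ℕ) (P : NCP m) (x : Fin m) : ℕ := auxData P x / k

noncomputable def auxG {m : ℕ} (k : ℕ) (P : NCP m) (i : Fin m) : ℕ :=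
  (∑ j ∈ univ.filter (fun j : Fin m => j ≤ i), auxF k P j) + i

lemma aux_dvd {m k : ℕ} {P : NCP m} (hP : IsKDivisible k P) (x : Fin m) :
    k ∣ auxData P x := by
  rw [auxData]
  split_ifs with h
  · exact hP _ (P.part_mem.2 (mem_univ x))
  · exact dvd_zero k

lemma aux_sumF {m k : ℕ} (P : NCP m) (hP : IsKDivisible k P) :
    k * ∑ x, auxF k P x = m := by
  rw [Finset.mul_sum]
  have h1 : ∀ x ∈ (univ : Finset (Fin m)), k * auxF k P x = auxData P x := fun x _ =>
    Nat.mul_div_cancel' (aux_dvd hP x)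
  rw [Finset.sum_congr rfl h1, aux_sum_data, Finset.card_univ, Fintype.card_fin]

lemma aux_G_mono {m k : ℕ} (P : NCP m) {i j : Fin m} (hij : i < j) :
    auxG k P i < auxG k P j := by
  have hsub : univ.filter (fun x : Fin m => x ≤ i) ⊆ univ.filter (fun x => x ≤ j) := by
    intro x hx
    rw [mem_filter] at hx ⊢
    exact ⟨hx.1, le_trans hx.2 (le_of_lt hij)⟩
  have hs := Finset.sum_le_sum_of_subset (f := auxF k P) hsub
  have hv : i.val < j.val := hij
  unfold auxG
  omega

lemma aux_F_of_G {m k : ℕ} (P P' : NCP m) (hG : ∀ i, auxG k P i = auxG k P' i) :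
    ∀ i, auxF k P i = auxF k P' i := by
  have key : ∀ v : ℕ, ∀ i : Fin m, i.val = v → auxF k P i = auxF k P' i := by
    intro v
    induction v using Nat.strong_induction_on with
    | _ v ih =>
      intro i hv
      have hG' := hG i
      unfold auxG at hG'
      have hsplit : univ.filter (fun j : Fin m => j ≤ i)
          = insert i (univ.filter (fun j => j < i)) := by
        ext j
        simp only [mem_filter, mem_insert, mem_univ, true_and]
        rw [le_iff_lt_or_eq]
        tauto
      rw [hsplit, Finset.sum_insert (by simp), Finset.sum_insert (by simp)] at hG'
      have hrest : ∑ j ∈ univ.filter (fun j : Fin m => j < i), auxF k P j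
          = ∑ j ∈ univ.filter (fun j : Fin m => j < i), auxF k P' j := by
        refine Finset.sum_congr rfl (fun j hj => ?_)
        rw [mem_filter] at hj
        have hjv : j.val < i.val := hj.2
        exact ih j.val (by omega) j rfl
      omega
  exact fun i => key i.val i rfl

lemma aux_card_bound (k n : ℕ) (hk : 0 < k) (hn : 0 < n) :
    Fintype.card {P : NCP (k * n) // IsNonCrossing P ∧ IsKDivisible k P} ≤
      ((k+1) * n).choose n := by
  classical
  have hGbound : ∀ (P : NCP (k*n)), IsKDivisible k P → ∀ i : Fin (k*n),
      auxG k P i < (k+1)*n := by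
    intro P hP i
    have hsum : ∑ j ∈ univ.filter (fun j : Fin (k*n) => j ≤ i), auxF k P j
        ≤ ∑ j, auxF k P j := Finset.sum_le_sum_of_subset (filter_subset _ _)
    have hs := aux_sumF P hP
    have htot : ∑ j, auxF k P j = n := by
      have := Nat.eq_of_mul_eq_mul_left hk (by rw [hs] : k * ∑ x, auxF k P x = k * n)
      exact this
    have hlt := i.isLt
    unfold auxG
    have : (k+1)*n = k*n + n := by ring
    omega
  let enc : {P : NCP (k*n) // IsNonCrossing P ∧ IsKDivisible k P} →
      {T : Finset (Fin ((k+1)*n)) // T.card = k*n} := fun P =>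
    ⟨(univ : Finset (Fin (k*n))).image
        (fun i => (⟨auxG k P.1 i, hGbound P.1 P.2.2 i⟩ : Fin ((k+1)*n))), by
      rw [Finset.card_image_of_injective _ (fun a b hab => ?_), Finset.card_univ,
        Fintype.card_fin]
      have hval : auxG k P.1 a = auxG k P.1 b := congrArg Fin.val hab
      by_contra hne
      rcases lt_or_gt_of_ne hne with hlt | hlt
      · exact absurd hval (ne_of_lt (aux_G_mono P.1 hlt))
      · exact absurd hval.symm (ne_of_lt (aux_G_mono P.1 hlt))⟩
  have hencinj : Function.Injective enc := by
    intro P P' he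
    have hTeq := Subtype.ext_iff.1 he
    dsimp only [enc] at hTeq
    set T := (univ : Finset (Fin (k*n))).image
      (fun i => (⟨auxG k P.1 i, hGbound P.1 P.2.2 i⟩ : Fin ((k+1)*n))) with hT
    have hTcard : T.card = k*n := (enc P).2
    have hmem1 : ∀ i, (⟨auxG k P.1 i, hGbound P.1 P.2.2 i⟩ : Fin ((k+1)*n)) ∈ T :=
      fun i => Finset.mem_image_of_mem _ (mem_univ i)
    have hmem2 : ∀ i, (⟨auxG k P'.1 i, hGbound P'.1 P'.2.2 i⟩ : Fin ((k+1)*n)) ∈ T := by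
      intro i
      rw [hTeq]
      exact Finset.mem_image_of_mem _ (mem_univ i)
    have hmono1 : StrictMono (fun i : Fin (k*n) =>
        (⟨auxG k P.1 i, hGbound P.1 P.2.2 i⟩ : Fin ((k+1)*n))) := by
      intro a b hab
      exact aux_G_mono P.1 hab
    have hmono2 : StrictMono (fun i : Fin (k*n) =>
        (⟨auxG k P'.1 i, hGbound P'.1 P'.2.2 i⟩ : Fin ((k+1)*n))) := by
      intro a b hab
      exact aux_G_mono P'.1 hab
    have he1 := Finset.orderEmbOfFin_unique hTcard hmem1 hmono1
    have he2 := Finset.orderEmbOfFin_unique hTcard hmem2 hmono2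
    have hGeq : ∀ i, auxG k P.1 i = auxG k P'.1 i := by
      intro i
      have := congrFun (he1.trans he2.symm) i
      exact congrArg Fin.val this
    have hFeq := aux_F_of_G P.1 P'.1 hGeq
    have hDeq : auxData P.1 = auxData P'.1 := by
      funext x
      rw [← Nat.mul_div_cancel' (aux_dvd P.2.2 x), ← Nat.mul_div_cancel' (aux_dvd P'.2.2 x)]
      exact congrArg (k * ·) (hFeq x)
    exact Subtype.ext (aux_data_inj (univ : Finset (Fin (k*n))).card univ le_rfl P.1 P'.1
      P.2.1 P'.2.1 hDeq)
  calc Fintype.card {P : NCP (k * n) // IsNonCrossing P ∧ IsKDivisible k P}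
      ≤ Fintype.card {T : Finset (Fin ((k+1)*n)) // T.card = k*n} :=
        Fintype.card_le_of_injective enc hencinj
    _ = ((k+1)*n).choose (k*n) := by
        rw [Fintype.card_finset_len, Fintype.card_fin]
    _ = ((k+1)*n).choose n := by
        have h1 : (k+1)*n - n = k*n := by
          have : (k+1)*n = k*n + n := by ring
          omega
        have h2 : n ≤ (k+1)*n := by nlinarith
        rw [← h1, Nat.choose_symm h2]

lemma aux_choose_nat (k n : ℕ) (hn : 0 < n) :
    (n + k*n).choose n * k ^ (k*n) ≤ (k+1) ^ (n + k*n) := by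
  have h0 : n ∈ Finset.range ((n + k*n) + 1) := by
    rw [Finset.mem_range]; omega
  have hsum := add_pow n (k*n) (n + k*n)
  have hterm := Finset.single_le_sum
    (f := fun i => n^i * (k*n)^((n + k*n) - i) * (n + k*n).choose i)
    (fun i _ => Nat.zero_le _) h0
  simp only [Nat.cast_id] at hsum
  rw [← hsum] at hterm
  have he : (n + k*n) - n = k*n := by omega
  rw [he] at hterm
  have key : ((n + k*n).choose n * k ^ (k*n)) * n ^ (n + k*n)
      ≤ ((k+1) ^ (n + k*n)) * n ^ (n + k*n) := by
    calc ((n + k*n).choose n * k ^ (k*n)) * n ^ (n + k*n)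
        = n^n * (k*n)^(k*n) * (n + k*n).choose n := by
          rw [pow_add, mul_pow]; ring
      _ ≤ (n + k*n)^(n + k*n) := hterm
      _ = ((k+1) * n)^(n + k*n) := by ring_nf
      _ = ((k+1) ^ (n + k*n)) * n ^ (n + k*n) := by rw [mul_pow]
  exact Nat.le_of_mul_le_mul_right key (pow_pos hn _)

lemma aux_choose_real (k n : ℕ) (hk : 0 < k) (hn : 0 < n) :
    ((((k+1) * n).choose n : ℕ) : ℝ) ≤ (((k:ℝ)+1)^(k+1) / (k:ℝ)^k) ^ n := by
  have hnat := aux_choose_nat k n hn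
  have hcast : (((n + k*n).choose n : ℕ) : ℝ) * (k:ℝ)^(k*n) ≤ ((k:ℝ)+1)^(n + k*n) := by
    exact_mod_cast hnat
  have hkpos : (0:ℝ) < (k:ℝ)^(k*n) := pow_pos (by exact_mod_cast hk) _
  have hEq : (k+1) * n = n + k*n := by ring
  rw [div_pow, ← pow_mul, ← pow_mul, hEq, le_div_iff₀ hkpos]
  exact hcast

open MeasureTheory Filter in
lemma aux_meas_basic {μ : Measure ℝ} [IsProbabilityMeasure μ] {L : ℝ}
    (hsupp : μ (Set.Icc 0 L)ᶜ = 0) (hmean : ∫ x, x ∂μ = 1) :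
    1 ≤ L ∧ ∀ n : ℕ, 1 ≤ n → ∫ x, x ^ n ∂μ ≤ L ^ (n-1) := by
  have hae : ∀ᵐ x ∂μ, x ∈ Set.Icc 0 L := by
    rw [ae_iff]
    simpa [Set.compl_def] using hsupp
  have hL0 : 0 ≤ L := by
    by_contra hL
    push_neg at hL
    have hemp : Set.Icc (0:ℝ) L = ∅ := Set.Icc_eq_empty (by linarith)
    rw [hemp, Set.compl_empty] at hsupp
    have h1 : (1:ENNReal) = 0 := by rw [← measure_univ (μ := μ), hsupp]
    exact one_ne_zero h1
  have hint : ∀ n : ℕ, Integrable (fun x : ℝ => x ^ n) μ := by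
    intro n
    refine MeasureTheory.Integrable.mono' (integrable_const (L ^ n))
      ((continuous_pow n).aestronglyMeasurable) ?_
    filter_upwards [hae] with x hx
    rw [Real.norm_eq_abs, abs_of_nonneg (pow_nonneg hx.1 n)]
    exact pow_le_pow_left₀ hx.1 hx.2 n
  have hx1 : Integrable (fun x : ℝ => x) μ := by simpa using hint 1
  have hL1 : 1 ≤ L := by
    rw [← hmean]
    calc ∫ x, x ∂μ ≤ ∫ _x, L ∂μ := integral_mono_ae hx1 (integrable_const L)
          (by filter_upwards [hae] with x hx; exact hx.2)
      _ = L := by simp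
  refine ⟨hL1, fun n hn => ?_⟩
  have hmono : ∀ᵐ x ∂μ, x ^ n ≤ L^(n-1) * x := by
    filter_upwards [hae] with x hx
    have hsp : x ^ n = x^(n-1) * x := by
      conv_lhs => rw [show n = (n-1)+1 by omega]
      rw [pow_succ]
    rw [hsp]
    exact mul_le_mul_of_nonneg_right (pow_le_pow_left₀ hx.1 hx.2 _) hx.1
  calc ∫ x, x^n ∂μ ≤ ∫ x, L^(n-1) * x ∂μ :=
        integral_mono_ae (hint n) (hx1.const_mul _) hmono
    _ = L^(n-1) := by rw [MeasureTheory.integral_const_mul, hmean, mul_one]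
/-- If `μ₁,…,μ_k` are probability measures on `[0,L]` with mean `1` and non-negative free
cumulants, then `μ = μ₁ ⊠ ⋯ ⊠ μ_k` (characterized via the combinatorial moment formula) is
supported in `[0, eL(k+1)]`; more precisely
`limsup_n m_n(μ)^{1/n} ≤ (k+1)^{k+1}/k^k · L ≤ e(k+1)L`. -/
theorem stmt17 (k : ℕ) (hk : 0 < k) (L : ℝ) (μ : Fin k → Measure ℝ)
    [∀ i, IsProbabilityMeasure (μ i)]
    (hsupp : ∀ i, (μ i) (Set.Icc 0 L)ᶜ = 0)
    (hmean : ∀ i, ∫ x, x ∂(μ i) = 1)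
    (c : Fin k → ℕ → ℝ)
    (hc : ∀ i, ∀ n : ℕ, 0 < n → ∫ x, x ^ n ∂(μ i) =
      ∑ P : {P : NCP n // IsNonCrossing P}, ∏ t ∈ P.1.parts, c i t.card)
    (hpos : ∀ i, ∀ n : ℕ, 1 ≤ n → 0 ≤ c i n)
    (Kr : ∀ m : ℕ, NCP m → NCP m)
    (hKr : ∀ (m : ℕ) (P : NCP m), IsNonCrossing P → IsKr P (Kr m P))
    (ν : Measure ℝ) [IsProbabilityMeasure ν] (hν0 : ν (Set.Iio 0) = 0)
    (hcomp : ∃ M : ℝ, ν (Set.Ioi M) = 0)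
    (hν : ∀ n : ℕ, 0 < n → ∫ x, x ^ n ∂ν =
      ∑ P : {P : NCP (k * n) // IsNonCrossing P ∧ IsKDivisible k P},
        krProd k hk (Kr (k * n) P.1) c) :
    Filter.limsup (fun n : ℕ => (∫ x, x ^ n ∂ν) ^ (1 / (n : ℝ))) Filter.atTop ≤
        ((k : ℝ) + 1) ^ (k + 1) / (k : ℝ) ^ k * L ∧
      ((k : ℝ) + 1) ^ (k + 1) / (k : ℝ) ^ k * L ≤ Real.exp 1 * ((k : ℝ) + 1) * L ∧
      ν (Set.Icc 0 (Real.exp 1 * L * ((k : ℝ) + 1)))ᶜ = 0 := by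
  classical
  set B : ℝ := ((k : ℝ) + 1) ^ (k + 1) / (k : ℝ) ^ k with hBdef
  have hkR : (0:ℝ) < (k:ℝ) := by exact_mod_cast hk
  have hB0 : 0 < B := by
    rw [hBdef]; positivity
  -- basic facts about the μ i
  have hbasic := fun i => aux_meas_basic (hsupp i) (hmean i)
  have hL1 : 1 ≤ L := (hbasic ⟨0, hk⟩).1
  have hL0 : 0 ≤ L := le_trans zero_le_one hL1
  have hmoment : ∀ i, ∀ n : ℕ, 1 ≤ n → ∫ x, x ^ n ∂(μ i) ≤ L ^ (n-1) :=
    fun i => (hbasic i).2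
  -- cumulant bound
  have hcle : ∀ i, ∀ s : ℕ, 1 ≤ s → c i s ≤ L ^ (s-1) := by
    intro i s hs
    have h1 := hc i s hs
    have hne2 : Nonempty (Fin s) := ⟨⟨0, hs⟩⟩
    have hne : (Finset.univ : Finset (Fin s)) ≠ ⊥ := by
      simpa [Finset.bot_eq_empty] using (Finset.univ_nonempty (α := Fin s)).ne_empty
    set P0 : NCP s := Finpartition.indiscrete hne with hP0def
    have hP0parts : P0.parts = {Finset.univ} := rfl
    have hP0 : IsNonCrossing P0 := by
      intro a b c' d _ _ _ _ _
      exact ⟨Finset.univ, by rw [hP0parts]; exact Finset.mem_singleton_self _,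
        Finset.mem_univ _, Finset.mem_univ _⟩
    have hval : ∏ t ∈ P0.parts, c i t.card = c i s := by
      rw [hP0parts, Finset.prod_singleton, Finset.card_univ, Fintype.card_fin]
    have hterm := Finset.single_le_sum
      (f := fun P : {P : NCP s // IsNonCrossing P} => ∏ t ∈ P.1.parts, c i t.card)
      (fun P _ => Finset.prod_nonneg (fun t ht => hpos i t.card
        (Finset.card_pos.2 (P.1.nonempty_of_mem_parts ht))))
      (Finset.mem_univ (⟨P0, hP0⟩ : {P : NCP s // IsNonCrossing P}))
    dsimp only at hterm
    rw [hval] at hterm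
    rw [← h1] at hterm
    exact le_trans hterm (hmoment i s hs)
  -- bound on krProd
  have hkrP : ∀ n : ℕ, 0 < n → ∀ (P : NCP (k*n)), IsNonCrossing P → IsKDivisible k P →
      krProd k hk (Kr (k*n) P) c ≤ L ^ (n-1) := by
    intro n hn P hPnc hPdiv
    have hjoint := (hKr (k*n) P hPnc).1
    have hmpos : 0 < k*n := Nat.mul_pos hk hn
    have hcardQ : k*n + 1 ≤ P.parts.card + (Kr (k*n) P).parts.card :=
      aux_kr_card hmpos P (Kr (k*n) P) hjoint
    have hPle : P.parts.card * k ≤ n * k := by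
      calc P.parts.card * k = ∑ _t ∈ P.parts, k := by
            rw [Finset.sum_const, smul_eq_mul, mul_comm]
        _ ≤ ∑ t ∈ P.parts, t.card := Finset.sum_le_sum (fun t ht => Nat.le_of_dvd
            (Finset.card_pos.2 (P.nonempty_of_mem_parts ht)) (hPdiv t ht))
        _ = k*n := by rw [P.sum_card_parts, Finset.card_univ, Fintype.card_fin]
        _ = n*k := by ring
    have hPn : P.parts.card ≤ n := Nat.le_of_mul_le_mul_right hPle hk
    have hsumQ : ∑ t ∈ (Kr (k*n) P).parts, (t.card - 1) + (Kr (k*n) P).parts.card = k*n := by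
      have hone : ∀ t ∈ (Kr (k*n) P).parts, (t.card - 1) + 1 = t.card := fun t ht =>
        Nat.succ_pred_eq_of_pos (Finset.card_pos.2 ((Kr (k*n) P).nonempty_of_mem_parts ht))
      calc ∑ t ∈ (Kr (k*n) P).parts, (t.card - 1) + (Kr (k*n) P).parts.card
          = ∑ t ∈ (Kr (k*n) P).parts, ((t.card - 1) + 1) := by
            rw [Finset.sum_add_distrib, Finset.sum_const, smul_eq_mul, mul_one]
        _ = ∑ t ∈ (Kr (k*n) P).parts, t.card := Finset.sum_congr rfl hone
        _ = k*n := by rw [(Kr (k*n) P).sum_card_parts, Finset.card_univ, Fintype.card_fin]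
    have hexp2 : ∑ t ∈ (Kr (k*n) P).parts, (t.card - 1) ≤ n - 1 := by omega
    unfold krProd
    calc ∏ t ∈ (Kr (k*n) P).parts.attach,
          c ⟨((t.1.min' ((Kr (k*n) P).nonempty_of_mem_parts t.2)) : ℕ) % k, Nat.mod_lt _ hk⟩
            t.1.card
        ≤ ∏ t ∈ (Kr (k*n) P).parts.attach, L ^ (t.1.card - 1) := Finset.prod_le_prod
          (fun t _ => hpos _ _ (Finset.card_pos.2 ((Kr (k*n) P).nonempty_of_mem_parts t.2)))
          (fun t _ => hcle _ t.1.card (Finset.card_pos.2 ((Kr (k*n) P).nonempty_of_mem_parts t.2)))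
      _ = L ^ (∑ t ∈ (Kr (k*n) P).parts.attach, (t.1.card - 1)) := by
          rw [Finset.prod_pow_eq_pow_sum]
      _ = L ^ (∑ t ∈ (Kr (k*n) P).parts, (t.card - 1)) := by
          rw [Finset.sum_attach ((Kr (k*n) P).parts) (fun t => t.card - 1)]
      _ ≤ L ^ (n-1) := pow_le_pow_right₀ hL1 hexp2
  -- moment bound for ν
  have hmom : ∀ n : ℕ, 1 ≤ n → ∫ x, x^n ∂ν ≤ (B*L)^n := by
    intro n hn
    rw [hν n hn]
    have hcount := aux_card_bound k n hk hn
    calc ∑ P : {P : NCP (k*n) // IsNonCrossing P ∧ IsKDivisible k P},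
          krProd k hk (Kr (k*n) P.1) c
        ≤ (Finset.univ : Finset {P : NCP (k*n) // IsNonCrossing P ∧ IsKDivisible k P}).card
            • (L^(n-1)) :=
          Finset.sum_le_card_nsmul _ _ _ (fun P _ => hkrP n hn P.1 P.2.1 P.2.2)
      _ = (Fintype.card {P : NCP (k*n) // IsNonCrossing P ∧ IsKDivisible k P} : ℝ) * L^(n-1) := by
          rw [Finset.card_univ, nsmul_eq_mul]
      _ ≤ (((k+1)*n).choose n : ℝ) * L^(n-1) :=
          mul_le_mul_of_nonneg_right (by exact_mod_cast hcount) (pow_nonneg hL0 _)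
      _ ≤ B^n * L^(n-1) :=
          mul_le_mul_of_nonneg_right (aux_choose_real k n hk hn) (pow_nonneg hL0 _)
      _ ≤ B^n * L^n :=
          mul_le_mul_of_nonneg_left (pow_le_pow_right₀ hL1 (by omega)) (pow_nonneg (le_of_lt hB0) _)
      _ = (B*L)^n := (mul_pow _ _ _).symm
  -- nonnegativity of moments of ν
  have hνae0 : ∀ᵐ x ∂ν, 0 ≤ x := by
    rw [MeasureTheory.ae_iff]
    have : {x : ℝ | ¬ 0 ≤ x} = Set.Iio 0 := by
      ext x; simp [not_le]
    rw [this]; exact hν0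
  have hνnn : ∀ n : ℕ, 0 ≤ ∫ x, x^n ∂ν := by
    intro n
    apply MeasureTheory.integral_nonneg_of_ae
    filter_upwards [hνae0] with x hx
    exact pow_nonneg hx n
  have hBL0 : (0:ℝ) < B*L := mul_pos hB0 (lt_of_lt_of_le zero_lt_one hL1)
  -- Goal 1
  have goal1 : Filter.limsup (fun n : ℕ => (∫ x, x ^ n ∂ν) ^ (1 / (n : ℝ))) Filter.atTop
      ≤ B * L := by
    have hptwise : ∀ n : ℕ, 1 ≤ n → (∫ x, x^n ∂ν)^(1/(n:ℝ)) ≤ B*L := by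
      intro n hn
      have hnne : ((n:ℝ)) ≠ 0 := Nat.cast_ne_zero.2 (by omega)
      calc (∫ x, x^n ∂ν)^(1/(n:ℝ)) ≤ ((B*L)^n)^(1/(n:ℝ)) :=
          Real.rpow_le_rpow (hνnn n) (hmom n hn) (by positivity)
        _ = B*L := by
          rw [← Real.rpow_natCast (B*L) n, ← Real.rpow_mul (le_of_lt hBL0),
            mul_one_div, div_self hnne, Real.rpow_one]
    have hcobdd : Filter.IsCoboundedUnder (· ≤ ·) Filter.atTop
        (fun n : ℕ => (∫ x, x ^ n ∂ν) ^ (1 / (n : ℝ))) := by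
      apply Filter.isCoboundedUnder_le_of_le Filter.atTop (x := 0)
      intro n
      exact Real.rpow_nonneg (hνnn n) _
    exact Filter.limsup_le_of_le hcobdd (Filter.eventually_atTop.2 ⟨1, hptwise⟩)
  -- Goal 2
  have hexp : B ≤ Real.exp 1 * ((k:ℝ)+1) := by
    have h1 : ((k:ℝ)+1)/k = 1 + 1/k := by field_simp
    have h2 : (1 + 1/(k:ℝ)) ≤ Real.exp (1/k) := by
      have := Real.add_one_le_exp (1/(k:ℝ)); linarith
    have h3 : (((k:ℝ)+1)/k)^k ≤ (Real.exp (1/k))^k := by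
      rw [h1]; exact pow_le_pow_left₀ (by positivity) h2 k
    have h4 : (Real.exp (1/(k:ℝ)))^k = Real.exp 1 := by
      rw [← Real.exp_nat_mul]
      congr 1
      field_simp
    have hBeq : B = (((k:ℝ)+1)/k)^k * ((k:ℝ)+1) := by
      rw [hBdef, div_pow, pow_succ]
      field_simp
    rw [hBeq]
    exact mul_le_mul_of_nonneg_right (le_trans h3 (le_of_eq h4)) (by positivity)
  have goal2 : B * L ≤ Real.exp 1 * ((k:ℝ)+1) * L := mul_le_mul_of_nonneg_right hexp hL0
  -- Goal 3
  obtain ⟨M, hM⟩ := hcomp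
  have haeν : ∀ᵐ x ∂ν, x ∈ Set.Icc 0 (max M 0) := by
    rw [MeasureTheory.ae_iff]
    refine measure_mono_null ?_ (measure_union_null hν0 hM)
    intro x hx
    simp only [Set.mem_setOf_eq, Set.mem_Icc, not_and_or, not_le] at hx
    rcases hx with h | h
    · exact Or.inl h
    · right
      simp only [Set.mem_Ioi]
      exact lt_of_le_of_lt (le_max_left M 0) h
  have hintν : ∀ n : ℕ, MeasureTheory.Integrable (fun x : ℝ => x ^ n) ν := by
    intro n
    refine MeasureTheory.Integrable.mono' (MeasureTheory.integrable_const ((max M 0) ^ n))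
      ((continuous_pow n).aestronglyMeasurable) ?_
    filter_upwards [haeν] with x hx
    rw [Real.norm_eq_abs, abs_of_nonneg (pow_nonneg hx.1 n)]
    exact pow_le_pow_left₀ hx.1 hx.2 n
  have hIoi : ∀ b : ℝ, B*L < b → ν (Set.Ioi b) = 0 := by
    intro b hb
    by_contra h0
    have hbpos : 0 < b := lt_trans hBL0 hb
    have hδ : 0 < (ν (Set.Ioi b)).toReal :=
      ENNReal.toReal_pos h0 (measure_ne_top ν _)
    have hlow : ∀ n : ℕ, 1 ≤ n → (ν (Set.Ioi b)).toReal * b^n ≤ ∫ x, x^n ∂ν := by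
      intro n hn
      have h1 : ∫ _x in Set.Ioi b, (b:ℝ)^n ∂ν ≤ ∫ x in Set.Ioi b, x^n ∂ν := by
        apply MeasureTheory.setIntegral_mono_on
          (MeasureTheory.integrableOn_const (measure_ne_top ν _))
          ((hintν n).integrableOn) measurableSet_Ioi
        intro x hx
        exact pow_le_pow_left₀ (le_of_lt hbpos) (le_of_lt hx) n
      have h2 : ∫ x in Set.Ioi b, x^n ∂ν ≤ ∫ x, x^n ∂ν := by
        apply MeasureTheory.setIntegral_le_integral (hintν n)
        filter_upwards [hνae0] with x hx
        exact pow_nonneg hx n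
      rw [MeasureTheory.setIntegral_const, smul_eq_mul] at h1
      exact le_trans h1 h2
    have hratio : ∀ n : ℕ, 1 ≤ n → (ν (Set.Ioi b)).toReal ≤ ((B*L)/b)^n := by
      intro n hn
      have hh := le_trans (hlow n hn) (hmom n hn)
      rw [div_pow, le_div_iff₀ (pow_pos hbpos n)]
      exact hh
    have htend : Filter.Tendsto (fun n : ℕ => ((B*L)/b)^n) Filter.atTop (nhds 0) :=
      tendsto_pow_atTop_nhds_zero_of_lt_one (by positivity) ((div_lt_one hbpos).2 hb)
    have hle0 : (ν (Set.Ioi b)).toReal ≤ 0 :=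
      ge_of_tendsto htend (Filter.eventually_atTop.2 ⟨1, fun n hn => hratio n hn⟩)
    linarith
  have hIoi2 : ν (Set.Ioi (Real.exp 1 * L * ((k:ℝ)+1))) = 0 := by
    have hE : B * L ≤ Real.exp 1 * L * ((k:ℝ)+1) := by
      calc B*L ≤ Real.exp 1 * ((k:ℝ)+1) * L := goal2
        _ = Real.exp 1 * L * ((k:ℝ)+1) := by ring
    have hcover : Set.Ioi (Real.exp 1 * L * ((k:ℝ)+1))
        = ⋃ j : ℕ, Set.Ioi (Real.exp 1 * L * ((k:ℝ)+1) + 1/(j+1)) := by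
      ext x
      simp only [Set.mem_Ioi, Set.mem_iUnion]
      constructor
      · intro hx
        obtain ⟨j, hj⟩ := exists_nat_one_div_lt
          (show (0:ℝ) < x - Real.exp 1 * L * ((k:ℝ)+1) by linarith)
        exact ⟨j, by linarith⟩
      · rintro ⟨j, hj⟩
        have hp : (0:ℝ) < 1/((j:ℝ)+1) := by positivity
        linarith
    rw [hcover]
    apply measure_iUnion_null
    intro j
    apply hIoi
    have hp : (0:ℝ) < 1/((j:ℝ)+1) := by positivity
    linarith
  refine ⟨goal1, goal2, ?_⟩
  refine measure_mono_null ?_ (measure_union_null hν0 hIoi2)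
  intro x hx
  simp only [Set.mem_compl_iff, Set.mem_Icc, not_and_or, not_le] at hx
  rcases hx with h | h
  · exact Or.inl h
  · exact Or.inr h
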